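/- Let n ≥ 3, let U ⊆ ℝⁿ be an open convex set, let ℓ > 0, and for 1 ≤ i, j ≤ n let g_{ij} : ℝ → ℝ be continuously differentiable functions with g_{ij} = g_{ji}, such that for all x ∈ U: g'_{ij}(x_i + x_j) ≥ ℓ for all i ≠ j, and g'_{ii}(2x_i) ≥ 0 for all i. Define F : U → ℝⁿ by F_i(x) = Σ_{j=1}^n g_{ij}(x_i + x_j). Then for all x, y ∈ U, |x − y|_∞ ≤ (3n−4)/(2ℓ(n−1)(n−2)) · |F(x) − F(y)|_∞; in particular F is injective on U. -/

import Mathlib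

set_option maxHeartbeats 1600000

open Finset

private lemma slope_mono (g : ℝ → ℝ) (hg : ContDiff ℝ 1 g) (c a b : ℝ)
    (hc : ∀ s ∈ Set.uIcc a b, c ≤ deriv g s) (hab : a ≤ b) :
    c * (b - a) ≤ g b - g a := by
  have hdiff : Differentiable ℝ g := hg.differentiable one_ne_zero
  have hφ : ∀ s : ℝ, HasDerivAt (fun t => g t - c * t) (deriv g s - c) s := by
    intro s
    exact ((hdiff s).hasDerivAt).sub (by simpa using (hasDerivAt_id s).const_mul c)
  have hmono : MonotoneOn (fun t => g t - c * t) (Set.uIcc a b) := by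
    apply monotoneOn_of_deriv_nonneg (convex_uIcc a b)
    · exact (hdiff.continuous.sub (continuous_const.mul continuous_id)).continuousOn
    · intro s hs
      exact (hφ s).differentiableAt.differentiableWithinAt
    · intro s hs
      have h1 := hc s (interior_subset hs)
      rw [(hφ s).deriv]
      linarith
  have h := hmono Set.left_mem_uIcc Set.right_mem_uIcc hab
  simp only at h
  linarith


private lemma aux_core (ν t S L Q M ℓ : ℝ) (hν : 3 ≤ ν) (ht : 0 ≤ t) (hℓ : 0 < ℓ) (hM : 0 ≤ M)
    (hCS : (L - t)^2 ≤ (ν-1)*(Q - t^2))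
    (hLS : 2*t ≤ L + S)
    (hLt : t ≤ L)
    (hrow : ℓ * ((ν-2) * t + S) ≤ M)
    (hW : ℓ * ((ν-2)*Q + S^2) ≤ L * M) :
    2*ℓ*(ν-1)*(ν-2) * t ≤ (3*ν-4) * M := by
  rcases le_or_gt ((3*ν-4)*(-S)) ((ν-2)^2*t) with hc | hc
  · -- case 1
    have h := mul_le_mul_of_nonneg_left hrow (by linarith : (0:ℝ) ≤ 3*ν-4)
    nlinarith [mul_pos hℓ hℓ, mul_nonneg hℓ.le ht, mul_le_mul_of_nonneg_left hc hℓ.le]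
  · -- case 2
    have hE : (ν-2)^2*t ≤ (3*ν-4)*(-S) := hc.le
    have key : 2*(ν-1)*(ν-2)*(t*L) ≤ (3*ν-4)*((ν-2)*Q + S^2) := by
      have hG : 0 ≤ (L - t) - (t - S) := by linarith
      have hEn : 0 ≤ (3*ν-4)*(-S) - (ν-2)^2*t := by linarith
      have hSn : S ≤ 0 := by nlinarith
      have hbr : 0 ≤ (3*ν-4)*((L-t)+t-S) - 2*(ν-1)^2*t := by nlinarith
      have hid : (ν-1)*(3*ν-4)*((3*ν-4)*((ν-2)*Q + S^2) - 2*(ν-1)*(ν-2)*(t*L)) =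
          (3*ν-4)^2*(ν-2)*((ν-1)*(Q-t^2) - (L-t)^2)
          + (3*ν-4)*(ν-2)*((L-t)-(t-S))*((3*ν-4)*((L-t)+t-S) - 2*(ν-1)^2*t)
          + (2*ν-3)*((3*ν-4)*(-S)-(ν-2)^2*t)^2
          + 2*(ν-1)^2*(ν-2)*(t*((3*ν-4)*(-S)-(ν-2)^2*t)) := by ring
      have h1 : 0 ≤ (3*ν-4)^2*(ν-2)*((ν-1)*(Q-t^2) - (L-t)^2) := by
        apply mul_nonneg (mul_nonneg (sq_nonneg _) (by linarith)); linarith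
      have h2 : 0 ≤ (3*ν-4)*(ν-2)*((L-t)-(t-S))*((3*ν-4)*((L-t)+t-S) - 2*(ν-1)^2*t) :=
        mul_nonneg (mul_nonneg (mul_nonneg (by linarith) (by linarith)) hG) hbr
      have h3 : 0 ≤ (2*ν-3)*((3*ν-4)*(-S)-(ν-2)^2*t)^2 :=
        mul_nonneg (by linarith) (sq_nonneg _)
      have h4 : 0 ≤ 2*(ν-1)^2*(ν-2)*(t*((3*ν-4)*(-S)-(ν-2)^2*t)) := by
        apply mul_nonneg (mul_nonneg (by positivity) (by linarith)) (mul_nonneg ht hEn)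
      have hpos : 0 < (ν-1)*(3*ν-4) := by nlinarith
      have hD : 0 ≤ (ν-1)*(3*ν-4)*((3*ν-4)*((ν-2)*Q + S^2) - 2*(ν-1)*(ν-2)*(t*L)) := by
        rw [hid]; linarith
      have hD2 : 0 ≤ (3*ν-4)*((ν-2)*Q + S^2) - 2*(ν-1)*(ν-2)*(t*L) := by
        by_contra h
        push_neg at h
        exact absurd hD (not_le.mpr (mul_neg_of_pos_of_neg hpos (by linarith)))
      linarith
    -- combine: ℓ * key chain, divide by L
    rcases eq_or_lt_of_le ht with ht0 | ht0
    · have hz : 2*ℓ*(ν-1)*(ν-2)*t = 0 := by rw [← ht0]; ring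
      have : 0 ≤ (3*ν-4)*M := mul_nonneg (by linarith) hM
      linarith
    · have hL : 0 < L := lt_of_lt_of_le ht0 hLt
      have c1 : ℓ * (2*(ν-1)*(ν-2)*(t*L)) ≤ ℓ * ((3*ν-4)*((ν-2)*Q + S^2)) :=
        mul_le_mul_of_nonneg_left key hℓ.le
      have c2 : ℓ * ((3*ν-4)*((ν-2)*Q + S^2)) ≤ (3*ν-4)*(L*M) := by
        calc ℓ * ((3*ν-4)*((ν-2)*Q + S^2)) = (3*ν-4)*(ℓ*((ν-2)*Q + S^2)) := by ring
          _ ≤ (3*ν-4)*(L*M) := mul_le_mul_of_nonneg_left hW (by linarith)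
      have e1 : ℓ * (2*(ν-1)*(ν-2)*(t*L)) = (2*ℓ*(ν-1)*(ν-2)*t)*L := by ring
      have e2 : (3*ν-4)*(L*M) = ((3*ν-4)*M)*L := by ring
      have c3 : (2*ℓ*(ν-1)*(ν-2)*t) * L ≤ ((3*ν-4)*M) * L := by linarith
      exact le_of_mul_le_mul_right c3 hL


private lemma aux_matrix (n : ℕ) (hn : 3 ≤ n) (ℓ M : ℝ) (hℓ : 0 < ℓ) (hM : 0 ≤ M)
    (A : Fin n → Fin n → ℝ) (u v : Fin n → ℝ)
    (hsym : ∀ i j, A i j = A j i)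
    (hoff : ∀ i j, i ≠ j → ℓ ≤ A i j)
    (hdiag : ∀ i, 0 ≤ A i i)
    (hv : ∀ i, v i = ∑ j, A i j * (u i + u j))
    (hvM : ∀ i, |v i| ≤ M)
    (p : Fin n) (hp : ∀ j, |u j| ≤ u p) :
    2*ℓ*((n:ℝ)-1)*((n:ℝ)-2) * u p ≤ (3*(n:ℝ)-4) * M := by
  have hν : (3:ℝ) ≤ (n:ℝ) := by exact_mod_cast hn
  set S := ∑ j, u j with hS
  set Q := ∑ j, (u j)^2 with hQ
  set L := ∑ j, |u j| with hL
  have ht : 0 ≤ u p := le_trans (abs_nonneg _) (hp p)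
  have hupj : ∀ j, 0 ≤ u p + u j := by
    intro j
    have := (abs_le.mp (hp j)).1
    linarith
  have hcard : ((univ.erase p).card : ℝ) = (n:ℝ) - 1 := by
    rw [card_erase_of_mem (mem_univ p)]
    simp [Fintype.card_fin]
    rw [Nat.cast_sub (by omega)]
    simp
  -- row p bound
  have hrow : ℓ * (((n:ℝ)-2) * u p + S) ≤ M := by
    have h4 : v p = A p p * (u p + u p) + ∑ j ∈ univ.erase p, A p j * (u p + u j) := by
      rw [hv p, ← Finset.add_sum_erase _ _ (mem_univ p)]
    have h2 : ∑ j ∈ univ.erase p, ℓ * (u p + u j) ≤ ∑ j ∈ univ.erase p, A p j * (u p + u j) := by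
      apply sum_le_sum
      intro j hj
      exact mul_le_mul_of_nonneg_right (hoff p j (Ne.symm (mem_erase.mp hj).1)) (hupj j)
    have h3 : ∑ j ∈ univ.erase p, ℓ * (u p + u j) = ℓ * ((((n:ℝ)-1)) * u p + (S - u p)) := by
      rw [← mul_sum, sum_add_distrib, sum_const, Finset.sum_erase_eq_sub (mem_univ p), nsmul_eq_mul, hcard]
    have h5 : 0 ≤ A p p * (u p + u p) := mul_nonneg (hdiag p) (by linarith)
    have h6 : v p ≤ |v p| := le_abs_self _
    have := hvM p
    nlinarith [h4, h2, h3, h5, h6]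
  -- weighted bound
  have hW : ℓ * (((n:ℝ)-2)*Q + S^2) ≤ L * M := by
    have hW1 : (∑ i, u i * v i) ≤ L * M := by
      calc (∑ i, u i * v i) ≤ ∑ i, |u i| * M := by
            apply sum_le_sum
            intro i _
            calc u i * v i ≤ |u i * v i| := le_abs_self _
              _ = |u i| * |v i| := abs_mul _ _
              _ ≤ |u i| * M := mul_le_mul_of_nonneg_left (hvM i) (abs_nonneg _)
        _ = L * M := by rw [← sum_mul]
    have hdouble : 2 * (∑ i, u i * v i) = ∑ i, ∑ j, A i j * (u i + u j)^2 := by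
      have e1 : (∑ i, u i * v i) = ∑ i, ∑ j, u i * (A i j * (u i + u j)) := by
        apply sum_congr rfl
        intro i _
        rw [hv i, mul_sum]
      have e2 : (∑ i, u i * v i) = ∑ i, ∑ j, u j * (A i j * (u i + u j)) := by
        rw [e1, Finset.sum_comm]
        apply sum_congr rfl
        intro i _
        apply sum_congr rfl
        intro j _
        rw [hsym j i, add_comm (u j) (u i)]
      calc 2 * (∑ i, u i * v i) = (∑ i, ∑ j, u i * (A i j * (u i + u j)))
            + ∑ i, ∑ j, u j * (A i j * (u i + u j)) := by rw [← e1, ← e2]; ring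
        _ = ∑ i, ∑ j, (u i * (A i j * (u i + u j)) + u j * (A i j * (u i + u j))) := by
            rw [← sum_add_distrib]
            apply sum_congr rfl
            intro i _
            rw [← sum_add_distrib]
        _ = ∑ i, ∑ j, A i j * (u i + u j)^2 := by
            apply sum_congr rfl; intro i _
            apply sum_congr rfl; intro j _
            ring
    have hinner : ∀ i : Fin n, ∑ j, (u i + u j)^2 = (n:ℝ)*(u i)^2 + 2*(u i)*S + Q := by
      intro i
      have : ∀ j, (u i + u j)^2 = (u i)^2 + 2*(u i)*(u j) + (u j)^2 := by intro j; ring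
      simp_rw [this]
      rw [sum_add_distrib, sum_add_distrib, sum_const, ← mul_sum, nsmul_eq_mul]
      simp [Fintype.card_fin]
      rfl
    have houter : ∑ i, ∑ j, (u i + u j)^2 = 2*(n:ℝ)*Q + 2*S^2 := by
      simp_rw [hinner]
      rw [sum_add_distrib, sum_add_distrib, sum_const, ← mul_sum, nsmul_eq_mul]
      have : ∑ i, 2*(u i)*S = 2*S*∑ i, u i := by rw [mul_sum]; apply sum_congr rfl; intros; ring
      rw [this]
      simp [Fintype.card_fin, ← hS, ← hQ]
      ring
    have hlow : ∑ i, ∑ j ∈ univ.erase i, ℓ * (u i + u j)^2 ≤ ∑ i, ∑ j, A i j * (u i + u j)^2 := by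
      apply sum_le_sum
      intro i _
      have hsplit : ∑ j, A i j * (u i + u j)^2
          = A i i * (u i + u i)^2 + ∑ j ∈ univ.erase i, A i j * (u i + u j)^2 := by
        rw [← Finset.add_sum_erase _ _ (mem_univ i)]
      have : ∑ j ∈ univ.erase i, ℓ * (u i + u j)^2 ≤ ∑ j ∈ univ.erase i, A i j * (u i + u j)^2 := by
        apply sum_le_sum
        intro j hj
        exact mul_le_mul_of_nonneg_right (hoff i j (Ne.symm (mem_erase.mp hj).1)) (sq_nonneg _)
      nlinarith [mul_nonneg (hdiag i) (sq_nonneg (u i + u i))]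
    have hlow2 : ∑ i, ∑ j ∈ univ.erase i, ℓ * (u i + u j)^2
        = ℓ * ((2*(n:ℝ)*Q + 2*S^2) - 4*Q) := by
      have : ∀ i : Fin n, ∑ j ∈ univ.erase i, ℓ * (u i + u j)^2
          = ℓ * ((∑ j, (u i + u j)^2) - (u i + u i)^2) := by
        intro i
        rw [← mul_sum, Finset.sum_erase_eq_sub (mem_univ i)]
      simp_rw [this]
      rw [← mul_sum, sum_sub_distrib, houter]
      have h4Q : ∑ i, (u i + u i)^2 = 4*Q := by
        have : ∀ i : Fin n, (u i + u i)^2 = 4*(u i)^2 := by intro i; ring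
        simp_rw [this]
        rw [← mul_sum]
      rw [h4Q]
    have hring : ℓ * ((2*(n:ℝ)*Q + 2*S^2) - 4*Q) = 2*(ℓ*(((n:ℝ)-2)*Q + S^2)) := by ring
    linarith [hW1, hdouble, hlow, hlow2]
  -- Cauchy-Schwarz
  have habsp : |u p| = u p := abs_of_nonneg ht
  have hCS : (L - u p)^2 ≤ ((n:ℝ)-1)*(Q - (u p)^2) := by
    have hLe : L - u p = ∑ j ∈ univ.erase p, |u j| := by
      rw [Finset.sum_erase_eq_sub (mem_univ p), ← hL, habsp]
    have hQe : Q - (u p)^2 = ∑ j ∈ univ.erase p, (u j)^2 := by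
      rw [Finset.sum_erase_eq_sub (mem_univ p), ← hQ]
    have cs := sq_sum_le_card_mul_sum_sq (s := univ.erase p) (f := fun j => |u j|)
    simp_rw [sq_abs] at cs
    rw [hLe, hQe]
    calc (∑ j ∈ univ.erase p, |u j|)^2 ≤ ((univ.erase p).card : ℝ) * ∑ j ∈ univ.erase p, (u j)^2 := by
          exact_mod_cast cs
      _ = ((n:ℝ)-1) * ∑ j ∈ univ.erase p, (u j)^2 := by rw [hcard]
  have hLS : 2*(u p) ≤ L + S := by
    have hnn : ∀ i ∈ univ, 0 ≤ |u i| + u i := by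
      intro i _; linarith [neg_abs_le (u i)]
    have h : |u p| + u p ≤ ∑ i, (|u i| + u i) :=
      Finset.single_le_sum (f := fun i => |u i| + u i) hnn (mem_univ p)
    rw [sum_add_distrib] at h
    rw [habsp] at h
    linarith
  have hLt : u p ≤ L := by
    have h : |u p| ≤ ∑ i, |u i| :=
      Finset.single_le_sum (f := fun i => |u i|) (fun i _ => abs_nonneg (u i)) (mem_univ p)
    rw [habsp] at h
    exact h
  exact aux_core (n:ℝ) (u p) S L Q M ℓ hν ht hℓ hM hCS hLS hLt hrow hW


theorem inverse_function_lipschitz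
    (n : ℕ) (hn : 3 ≤ n) (U : Set (Fin n → ℝ)) (hUopen : IsOpen U)
    (hUconv : Convex ℝ U) (ℓ : ℝ) (hℓ : 0 < ℓ)
    (g : Fin n → Fin n → ℝ → ℝ)
    (hg1 : ∀ i j, ContDiff ℝ 1 (g i j))
    (hgsym : ∀ i j, g i j = g j i)
    (hder : ∀ x ∈ U, ∀ i j, i ≠ j → ℓ ≤ deriv (g i j) (x i + x j))
    (hder2 : ∀ x ∈ U, ∀ i, 0 ≤ deriv (g i i) (2 * x i)) :
    (∀ x ∈ U, ∀ y ∈ U,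
      ‖x - y‖ ≤ (3 * (n : ℝ) - 4) / (2 * ℓ * ((n : ℝ) - 1) * ((n : ℝ) - 2)) *
        ‖(fun i => ∑ j, g i j (x i + x j)) - (fun i => ∑ j, g i j (y i + y j))‖) ∧
    Set.InjOn (fun x (i : Fin n) => ∑ j, g i j (x i + x j)) U := by
  have hν : (3:ℝ) ≤ (n:ℝ) := by exact_mod_cast hn
  have hDpos : 0 < 2 * ℓ * ((n : ℝ) - 1) * ((n : ℝ) - 2) := by
    have h1 : (0:ℝ) < (n:ℝ)-1 := by linarith
    have h2 : (0:ℝ) < (n:ℝ)-2 := by linarith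
    exact mul_pos (mul_pos (mul_pos two_pos hℓ) h1) h2
  have main : ∀ x ∈ U, ∀ y ∈ U,
      ‖x - y‖ ≤ (3 * (n : ℝ) - 4) / (2 * ℓ * ((n : ℝ) - 1) * ((n : ℝ) - 2)) *
        ‖(fun i => ∑ j, g i j (x i + x j)) - (fun i => ∑ j, g i j (y i + y j))‖ := by
    intro x hx y hy
    -- segment membership
    have hmem : ∀ (i j : Fin n) (s : ℝ), s ∈ Set.uIcc (y i + y j) (x i + x j) →
        ∃ z ∈ U, z i + z j = s := by
      intro i j s hs
      rcases eq_or_ne (y i + y j) (x i + x j) with he | hne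
      · rw [← he, Set.uIcc_self, Set.mem_singleton_iff] at hs
        exact ⟨y, hy, hs.symm⟩
      · set a := y i + y j with ha
        set b := x i + x j with hb
        have hba : b - a ≠ 0 := sub_ne_zero.mpr (Ne.symm hne)
        set τ := (s - a) / (b - a) with hτ
        have hτ01 : 0 ≤ τ ∧ τ ≤ 1 := by
          rcases Set.mem_uIcc.mp hs with ⟨h1, h2⟩ | ⟨h1, h2⟩
          · have hlt : 0 < b - a := by
              rcases lt_or_eq_of_le (le_trans h1 h2) with h | h
              · linarith
              · exact absurd h hne
            constructor
            · exact div_nonneg (by linarith) hlt.le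
            · rw [div_le_one hlt]; linarith
          · have hlt : 0 < a - b := by
              rcases lt_or_eq_of_le (le_trans h1 h2) with h | h
              · linarith
              · exact absurd h.symm hne
            constructor
            · rw [hτ, div_nonneg_iff]
              right
              constructor <;> linarith
            · rw [hτ, div_le_one_iff]
              right; right
              constructor <;> linarith
        obtain ⟨hτ0, hτ1⟩ := hτ01
        refine ⟨(1 - τ) • y + τ • x, hUconv hy hx (by linarith) hτ0 (by ring), ?_⟩
        have happ : ∀ k : Fin n, ((1 - τ) • y + τ • x) k = (1 - τ) * y k + τ * x k := by
          intro k; simp [Pi.add_apply, Pi.smul_apply, smul_eq_mul]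
        rw [happ i, happ j]
        have hmul : τ * (b - a) = s - a := div_mul_cancel₀ _ hba
        have : (1 - τ) * y i + τ * x i + ((1 - τ) * y j + τ * x j) = a + τ * (b - a) := by
          rw [ha, hb]; ring
        rw [this, hmul]; ring
    -- slope matrix
    set A : Fin n → Fin n → ℝ := fun i j =>
      if y i + y j = x i + x j then (if i = j then 0 else ℓ)
      else (g i j (x i + x j) - g i j (y i + y j)) / ((x i + x j) - (y i + y j)) with hA
    have hP1 : ∀ i j, g i j (x i + x j) - g i j (y i + y j)
        = A i j * ((x i + x j) - (y i + y j)) := by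
      intro i j
      rw [hA]
      by_cases he : y i + y j = x i + x j
      · simp only [he, if_pos]
        simp
      · simp only [he, if_neg, if_false]
        rw [div_mul_cancel₀]
        exact sub_ne_zero.mpr (fun hcon => he (by linarith [hcon]))
    have hoffd : ∀ i j, i ≠ j → ℓ ≤ A i j := by
      intro i j hij
      rw [hA]
      by_cases he : y i + y j = x i + x j
      · simp [he, hij]
      · simp only [he, if_neg, if_false]
        have hderuIcc : ∀ s ∈ Set.uIcc (y i + y j) (x i + x j), ℓ ≤ deriv (g i j) s := by
          intro s hs
          obtain ⟨z, hz, hzs⟩ := hmem i j s hs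
          rw [← hzs]
          exact hder z hz i j hij
        rcases le_or_gt (y i + y j) (x i + x j) with hab | hab
        · have := slope_mono (g i j) (hg1 i j) ℓ (y i + y j) (x i + x j) hderuIcc hab
          rw [le_div_iff₀ (by cases lt_or_eq_of_le hab with
            | inl h => linarith
            | inr h => exact absurd h he)]
          linarith
        · have hderuIcc2 : ∀ s ∈ Set.uIcc (x i + x j) (y i + y j), ℓ ≤ deriv (g i j) s := by
            intro s hs
            exact hderuIcc s (Set.uIcc_comm (y i + y j) (x i + x j) ▸ hs)
          have := slope_mono (g i j) (hg1 i j) ℓ (x i + x j) (y i + y j) hderuIcc2 hab.le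
          have hq : (g i j (x i + x j) - g i j (y i + y j)) / ((x i + x j) - (y i + y j))
              = (g i j (y i + y j) - g i j (x i + x j)) / ((y i + y j) - (x i + x j)) := by
            rw [← neg_div_neg_eq]
            ring_nf
          rw [hq, le_div_iff₀ (by linarith)]
          linarith
    have hdiagd : ∀ i, 0 ≤ A i i := by
      intro i
      rw [hA]
      by_cases he : y i + y i = x i + x i
      · simp [he]
      · simp only [he, if_neg, if_false]
        have hderuIcc : ∀ s ∈ Set.uIcc (y i + y i) (x i + x i), 0 ≤ deriv (g i i) s := by
          intro s hs
          obtain ⟨z, hz, hzs⟩ := hmem i i s hs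
          rw [← hzs, ← two_mul]
          exact hder2 z hz i
        rcases le_or_gt (y i + y i) (x i + x i) with hab | hab
        · have := slope_mono (g i i) (hg1 i i) 0 (y i + y i) (x i + x i) hderuIcc hab
          apply div_nonneg (by linarith)
          linarith
        · have hderuIcc2 : ∀ s ∈ Set.uIcc (x i + x i) (y i + y i), 0 ≤ deriv (g i i) s := by
            intro s hs
            exact hderuIcc s (Set.uIcc_comm (y i + y i) (x i + x i) ▸ hs)
          have := slope_mono (g i i) (hg1 i i) 0 (x i + x i) (y i + y i) hderuIcc2 hab.le
          apply div_nonneg_of_nonpos (by linarith)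
          linarith
    have hsymd : ∀ i j, A i j = A j i := by
      intro i j
      rw [hA]
      simp only
      rw [hgsym i j, add_comm (y i) (y j), add_comm (x i) (x j)]
      by_cases hij : i = j
      · simp [hij]
      · simp [hij, Ne.symm hij]

    -- now assemble
    set u : Fin n → ℝ := x - y with hu
    set vv : Fin n → ℝ :=
      (fun i => ∑ j, g i j (x i + x j)) - (fun i => ∑ j, g i j (y i + y j)) with hvv
    set M : ℝ := ‖vv‖ with hM
    have hM0 : 0 ≤ M := norm_nonneg _
    have hui : ∀ i, u i = x i - y i := fun i => rfl
    have hv : ∀ i, vv i = ∑ j, A i j * (u i + u j) := by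
      intro i
      have : vv i = ∑ j, (g i j (x i + x j) - g i j (y i + y j)) := by
        rw [hvv]
        simp only [Pi.sub_apply]
        rw [← Finset.sum_sub_distrib]
      rw [this]
      apply sum_congr rfl
      intro j _
      rw [hP1 i j, hui i, hui j]
      ring_nf
    have hvM : ∀ i, |vv i| ≤ M := by
      intro i
      have := norm_le_pi_norm vv i
      rwa [Real.norm_eq_abs] at this
    have hne : Nonempty (Fin n) := ⟨⟨0, by omega⟩⟩
    obtain ⟨p, _, hp⟩ := Finset.exists_max_image univ (fun i => |u i|) univ_nonempty
    have hp' : ∀ j, |u j| ≤ |u p| := fun j => hp j (mem_univ j)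
    have hfin : 2*ℓ*((n:ℝ)-1)*((n:ℝ)-2) * |u p| ≤ (3*(n:ℝ)-4) * M := by
      rcases le_or_gt 0 (u p) with hsign | hsign
      · have := aux_matrix n hn ℓ M hℓ hM0 A u vv hsymd hoffd hdiagd hv hvM p
          (fun j => by rw [← abs_of_nonneg hsign]; exact hp' j)
        rwa [abs_of_nonneg hsign]
      · have hv' : ∀ i, (-vv) i = ∑ j, A i j * ((-u) i + (-u) j) := by
          intro i
          simp only [Pi.neg_apply]
          rw [hv i, ← Finset.sum_neg_distrib]
          apply sum_congr rfl
          intro j _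
          ring
        have hvM' : ∀ i, |(-vv) i| ≤ M := by
          intro i
          rw [Pi.neg_apply, abs_neg]
          exact hvM i
        have hp'' : ∀ j, |(-u) j| ≤ (-u) p := by
          intro j
          rw [Pi.neg_apply, abs_neg, Pi.neg_apply, ← abs_of_nonpos hsign.le]
          exact hp' j
        have := aux_matrix n hn ℓ M hℓ hM0 A (-u) (-vv) hsymd hoffd hdiagd hv' hvM' p hp''
        rw [Pi.neg_apply] at this
        rwa [abs_of_nonpos hsign.le]
    have hb : ∀ i, |u i| ≤ (3*(n:ℝ)-4) * M / (2*ℓ*((n:ℝ)-1)*((n:ℝ)-2)) := by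
      intro i
      rw [le_div_iff₀ hDpos]
      calc |u i| * (2*ℓ*((n:ℝ)-1)*((n:ℝ)-2)) = 2*ℓ*((n:ℝ)-1)*((n:ℝ)-2) * |u i| := by ring
        _ ≤ 2*ℓ*((n:ℝ)-1)*((n:ℝ)-2) * |u p| := by
            apply mul_le_mul_of_nonneg_left (hp' i) hDpos.le
        _ ≤ (3*(n:ℝ)-4) * M := hfin
    have hnorm : ‖u‖ ≤ (3*(n:ℝ)-4) * M / (2*ℓ*((n:ℝ)-1)*((n:ℝ)-2)) := by
      apply pi_norm_le_iff_of_nonneg (div_nonneg (mul_nonneg (by linarith) hM0) hDpos.le) |>.mpr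
      intro i
      rw [Real.norm_eq_abs]
      exact hb i
    rw [div_mul_eq_mul_div]
    exact hnorm
  refine ⟨main, ?_⟩
  intro x hx y hy heq
  have h := main x hx y hy
  have hzero : (fun i => ∑ j, g i j (x i + x j)) - (fun i => ∑ j, g i j (y i + y j)) = 0 := by
    have : (fun i => ∑ j, g i j (x i + x j)) = (fun i => ∑ j, g i j (y i + y j)) := heq
    rw [this, sub_self]
  rw [hzero, norm_zero, mul_zero] at h
  have : x - y = 0 := by
    rw [← norm_le_zero_iff]
    exact h
  exact sub_eq_zero.mp this
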